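/- arXiv:2408.10459 — 3 statements merged into one kernel-verified Lean document; each statement's English description precedes it below -/
import Mathlib

section
/- Let ξ ∈ ℝ and let v, w : ℝ² → ℝ be three times continuously differentiable on an open neighborhood of the point (ξ, y). Let a⁻, a⁺ > 0 be real constants. Assume the homogeneous jump conditions at (ξ, y): v(ξ, y) = w(ξ, y) (zero jump of u) and a⁺·∂w/∂x(ξ,y) = a⁻·∂v/∂x(ξ,y) (zero jump of the flux a·∂u/∂x across the vertical interface). Then there exist constants C > 0 and δ > 0 such that for all h with 0 < h < δ, | −a⁻·v(ξ−2h, y) + 4·a⁻·v(ξ−h, y) − 3·(a⁻ + a⁺)·v(ξ, y) + 4·a⁺·w(ξ+h, y) − a⁺·w(ξ+2h, y) | ≤ C·h³. -/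
open Set

lemma taylor3_aux {f : ℝ → ℝ} {b : ℝ} (hb : 0 < b) (hf : ContDiffOn ℝ 3 f (Icc 0 b))
    (hd : DifferentiableAt ℝ f 0) :
    ∃ C ≥ 0, ∃ A : ℝ, ∀ x ∈ Icc 0 b,
      |f x - (f 0 + x * deriv f 0 + x ^ 2 / 2 * A)| ≤ C * x ^ 3 := by
  have hf' : ContDiffOn ℝ (2 + 1 : ℕ) f (Icc 0 b) := by exact_mod_cast hf
  obtain ⟨C, hC⟩ := exists_taylor_mean_remainder_bound hb.le hf'
  refine ⟨max C 0, le_max_right _ _, iteratedDerivWithin 2 f (Icc 0 b) 0, ?_⟩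
  intro x hx
  have hT : taylorWithinEval f 2 (Icc 0 b) 0 x
      = f 0 + x * deriv f 0 + x ^ 2 / 2 * iteratedDerivWithin 2 f (Icc 0 b) 0 := by
    rw [taylor_within_apply]
    have h1 : iteratedDerivWithin 1 f (Icc 0 b) 0 = deriv f 0 := by
      rw [iteratedDerivWithin_one]
      exact hd.derivWithin (uniqueDiffOn_Icc hb _ (left_mem_Icc.mpr hb.le))
    simp only [Finset.sum_range_succ, Finset.sum_range_zero, iteratedDerivWithin_zero, h1,
      smul_eq_mul, sub_zero]
    have h0 : ((Nat.factorial 0 : ℕ) : ℝ) = 1 := by norm_num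
    have ha : ((Nat.factorial 1 : ℕ) : ℝ) = 1 := by norm_num
    have hc : ((Nat.factorial 2 : ℕ) : ℝ) = 2 := by norm_num [Nat.factorial]
    rw [h0, ha, hc]
    ring
  have hbd := hC x hx
  rw [hT] at hbd
  simp only [Real.norm_eq_abs, sub_zero] at hbd
  calc |f x - (f 0 + x * deriv f 0 + x ^ 2 / 2 * iteratedDerivWithin 2 f (Icc 0 b) 0)|
      ≤ C * x ^ 3 := hbd
    _ ≤ max C 0 * x ^ 3 :=
        mul_le_mul_of_nonneg_right (le_max_left _ _) (pow_nonneg hx.1 3)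



/-- Consistency of the 5-point interface finite difference scheme at a grid point on a
vertical interface line `x = ξ`: if `v`, `w` are three times continuously differentiable
smooth extensions of the solution from the left and right sides, satisfying the
homogeneous jump conditions `v(ξ,y) = w(ξ,y)` and `a⁺ ∂w/∂x(ξ,y) = a⁻ ∂v/∂x(ξ,y)`, then
`-a⁻ v(ξ-2h,y) + 4a⁻ v(ξ-h,y) - 3(a⁻+a⁺) v(ξ,y) + 4a⁺ w(ξ+h,y) - a⁺ w(ξ+2h,y) = O(h³)`. -/
theorem five_point_vertical_interface_consistency
    (ξ y : ℝ) (v w : ℝ × ℝ → ℝ) (s : Set (ℝ × ℝ)) (hs : IsOpen s) (hmem : (ξ, y) ∈ s)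
    (hv : ContDiffOn ℝ 3 v s) (hw : ContDiffOn ℝ 3 w s)
    (aminus aplus : ℝ) (haminus : 0 < aminus) (haplus : 0 < aplus)
    (hjump : v (ξ, y) = w (ξ, y))
    (hflux : aplus * deriv (fun t => w (t, y)) ξ = aminus * deriv (fun t => v (t, y)) ξ) :
    ∃ C > 0, ∃ δ > 0, ∀ h : ℝ, 0 < h → h < δ →
      |-aminus * v (ξ - 2 * h, y) + 4 * aminus * v (ξ - h, y)
        - 3 * (aminus + aplus) * v (ξ, y)
        + 4 * aplus * w (ξ + h, y) - aplus * w (ξ + 2 * h, y)| ≤ C * h ^ 3 := by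
  obtain ⟨ε, hε, hball⟩ := Metric.isOpen_iff.mp hs (ξ, y) hmem
  set b : ℝ := ε / 2 with hbdef
  have hb : 0 < b := by positivity
  set F : ℝ → ℝ := fun t => v (ξ - t, y) with hFdef
  set G : ℝ → ℝ := fun t => w (ξ + t, y) with hGdef
  -- membership of the parametrized segments in the ball
  have hmemF : ∀ t ∈ Icc (0:ℝ) b, (ξ - t, y) ∈ s := by
    intro t ht
    apply hball
    simp only [Metric.mem_ball, Prod.dist_eq, Real.dist_eq]
    have : |ξ - t - ξ| = t := by rw [abs_of_nonpos (by linarith [ht.1])]; ring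
    simp [this]
    rw [abs_of_nonneg ht.1]
    have := ht.2
    rw [hbdef] at this
    linarith
  have hmemG : ∀ t ∈ Icc (0:ℝ) b, (ξ + t, y) ∈ s := by
    intro t ht
    apply hball
    simp only [Metric.mem_ball, Prod.dist_eq, Real.dist_eq]
    have : |ξ + t - ξ| = t := by rw [abs_of_nonneg (by linarith [ht.1])]; ring
    simp [this]
    rw [abs_of_nonneg ht.1]
    have := ht.2
    rw [hbdef] at this
    linarith
  -- smoothness of F and G on [0, b]
  have hφF : ContDiff ℝ 3 (fun t : ℝ => (ξ - t, y)) :=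
    ContDiff.prodMk (contDiff_const.sub contDiff_id) contDiff_const
  have hφG : ContDiff ℝ 3 (fun t : ℝ => (ξ + t, y)) :=
    ContDiff.prodMk (contDiff_const.add contDiff_id) contDiff_const
  have hF : ContDiffOn ℝ 3 F (Icc 0 b) :=
    hv.comp hφF.contDiffOn (fun t ht => hmemF t ht)
  have hG : ContDiffOn ℝ 3 G (Icc 0 b) :=
    hw.comp hφG.contDiffOn (fun t ht => hmemG t ht)
  -- differentiability at points
  have hvA : ContDiffAt ℝ 3 v (ξ, y) := hv.contDiffAt (hs.mem_nhds hmem)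
  have hwA : ContDiffAt ℝ 3 w (ξ, y) := hw.contDiffAt (hs.mem_nhds hmem)
  have hVd : DifferentiableAt ℝ (fun t => v (t, y)) ξ := by
    have : ContDiffAt ℝ 3 (fun t : ℝ => v (t, y)) ξ :=
      hvA.comp ξ ((ContDiff.prodMk contDiff_id contDiff_const).contDiffAt)
    exact this.differentiableAt (by norm_num)
  have hWd : DifferentiableAt ℝ (fun t => w (t, y)) ξ := by
    have : ContDiffAt ℝ 3 (fun t : ℝ => w (t, y)) ξ :=
      hwA.comp ξ ((ContDiff.prodMk contDiff_id contDiff_const).contDiffAt)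
    exact this.differentiableAt (by norm_num)
  -- derivatives of F and G at 0
  have hFder : HasDerivAt F (-(deriv (fun t => v (t, y)) ξ)) 0 := by
    have hin : HasDerivAt (fun t : ℝ => ξ - t) (-1) 0 := by
      simpa using (hasDerivAt_id (0:ℝ)).const_sub ξ
    have hout : HasDerivAt (fun t => v (t, y)) (deriv (fun t => v (t, y)) ξ)
        ((fun t : ℝ => ξ - t) 0) := by
      simpa using hVd.hasDerivAt
    have := hout.comp 0 hin
    simpa [Function.comp_def, mul_comm] using this
  have hGder : HasDerivAt G (deriv (fun t => w (t, y)) ξ) 0 := by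
    have hin : HasDerivAt (fun t : ℝ => ξ + t) 1 0 := by
      simpa using (hasDerivAt_id (0:ℝ)).const_add ξ
    have hout : HasDerivAt (fun t => w (t, y)) (deriv (fun t => w (t, y)) ξ)
        ((fun t : ℝ => ξ + t) 0) := by
      simpa using hWd.hasDerivAt
    have := hout.comp 0 hin
    simpa [Function.comp_def] using this
  have hFd0 : DifferentiableAt ℝ F 0 := hFder.differentiableAt
  have hGd0 : DifferentiableAt ℝ G 0 := hGder.differentiableAt
  have hFderiv : deriv F 0 = -(deriv (fun t => v (t, y)) ξ) := hFder.deriv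
  have hGderiv : deriv G 0 = deriv (fun t => w (t, y)) ξ := hGder.deriv
  -- Taylor bounds
  obtain ⟨Cf, hCf0, Af, hCf⟩ := taylor3_aux hb hF hFd0
  obtain ⟨Cg, hCg0, Ag, hCg⟩ := taylor3_aux hb hG hGd0
  refine ⟨12 * (aminus * Cf + aplus * Cg) + 1, by positivity, b / 2, by positivity, ?_⟩
  intro h hh hhb
  have hmem1 : h ∈ Icc (0:ℝ) b := ⟨hh.le, by linarith⟩
  have hmem2 : 2 * h ∈ Icc (0:ℝ) b := ⟨by linarith, by linarith⟩
  have e1 := hCf h hmem1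
  have e2 := hCf (2 * h) hmem2
  have e3 := hCg h hmem1
  have e4 := hCg (2 * h) hmem2
  have hF0 : F 0 = v (ξ, y) := by simp [hFdef]
  have hG0 : G 0 = w (ξ, y) := by simp [hGdef]
  rw [hF0, hFderiv] at e1 e2
  rw [hG0, hGderiv] at e3 e4
  set V := deriv (fun t => v (t, y)) ξ
  set W := deriv (fun t => w (t, y)) ξ
  set R1 := F h - (v (ξ, y) + h * -V + h ^ 2 / 2 * Af) with hR1
  set R2 := F (2 * h) - (v (ξ, y) + 2 * h * -V + (2 * h) ^ 2 / 2 * Af) with hR2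
  set R3 := G h - (w (ξ, y) + h * W + h ^ 2 / 2 * Ag) with hR3
  set R4 := G (2 * h) - (w (ξ, y) + 2 * h * W + (2 * h) ^ 2 / 2 * Ag) with hR4
  have hveq1 : v (ξ - 2 * h, y) = F (2 * h) := rfl
  have hveq2 : v (ξ - h, y) = F h := rfl
  have hweq1 : w (ξ + h, y) = G h := rfl
  have hweq2 : w (ξ + 2 * h, y) = G (2 * h) := rfl
  have key : -aminus * v (ξ - 2 * h, y) + 4 * aminus * v (ξ - h, y)
        - 3 * (aminus + aplus) * v (ξ, y)
        + 4 * aplus * w (ξ + h, y) - aplus * w (ξ + 2 * h, y)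
      = aminus * (4 * R1 - R2) + aplus * (4 * R3 - R4) := by
    rw [hveq1, hveq2, hweq1, hweq2, hR1, hR2, hR3, hR4]
    linear_combination (-(3:ℝ) * aplus) * hjump + (2 * h) * hflux
  rw [key]
  -- bounds
  have b1 : |R1| ≤ Cf * h ^ 3 := e1
  have b2 : |R2| ≤ 8 * Cf * h ^ 3 := by
    calc |R2| ≤ Cf * (2 * h) ^ 3 := e2
      _ = 8 * Cf * h ^ 3 := by ring
  have b3 : |R3| ≤ Cg * h ^ 3 := e3
  have b4 : |R4| ≤ 8 * Cg * h ^ 3 := by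
    calc |R4| ≤ Cg * (2 * h) ^ 3 := e4
      _ = 8 * Cg * h ^ 3 := by ring
  have a1 := abs_le.mp b1
  have a2 := abs_le.mp b2
  have a3 := abs_le.mp b3
  have a4 := abs_le.mp b4
  have hh3 : (0:ℝ) < h ^ 3 := by positivity
  rw [abs_le]
  constructor
  · linarith [mul_le_mul_of_nonneg_left a1.1 haminus.le,
      mul_le_mul_of_nonneg_left a2.2 haminus.le,
      mul_le_mul_of_nonneg_left a3.1 haplus.le,
      mul_le_mul_of_nonneg_left a4.2 haplus.le]
  · linarith [mul_le_mul_of_nonneg_left a1.2 haminus.le,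
      mul_le_mul_of_nonneg_left a2.1 haminus.le,
      mul_le_mul_of_nonneg_left a3.2 haplus.le,
      mul_le_mul_of_nonneg_left a4.1 haplus.le]
end

section
/- Let ζ ∈ ℝ and let v, w : ℝ² → ℝ be three times continuously differentiable on an open neighborhood of the point (x, ζ). Let a⁻, a⁺ > 0 be real constants. Assume the homogeneous jump conditions at (x, ζ): v(x, ζ) = w(x, ζ) (zero jump of u) and a⁺·∂w/∂y(x,ζ) = a⁻·∂v/∂y(x,ζ) (zero jump of the flux a·∂u/∂y across the horizontal interface). Then there exist constants C > 0 and δ > 0 such that for all h with 0 < h < δ, | −a⁻·v(x, ζ−2h) + 4·a⁻·v(x, ζ−h) − 3·(a⁻ + a⁺)·v(x, ζ) + 4·a⁺·w(x, ζ+h) − a⁺·w(x, ζ+2h) | ≤ C·h³. -/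
open Set

/-- The 5-point interface combination as a function of the mesh size `h`. -/
noncomputable def fivePtPhi (f g : ℝ → ℝ) (ζ am ap : ℝ) : ℝ → ℝ := fun h =>
  -am * f (ζ - 2 * h) + 4 * am * f (ζ - h) - 3 * (am + ap) * f ζ
    + 4 * ap * g (ζ + h) - ap * g (ζ + 2 * h)

/-- First derivative of `fivePtPhi`. -/
noncomputable def fivePtPsi (f g : ℝ → ℝ) (ζ am ap : ℝ) : ℝ → ℝ := fun h =>
  2 * am * deriv f (ζ - 2 * h) - 4 * am * deriv f (ζ - h)
    + 4 * ap * deriv g (ζ + h) - 2 * ap * deriv g (ζ + 2 * h)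

/-- Second derivative of `fivePtPhi`. -/
noncomputable def fivePtChi (f g : ℝ → ℝ) (ζ am ap : ℝ) : ℝ → ℝ := fun h =>
  -4 * am * deriv (deriv f) (ζ - 2 * h) + 4 * am * deriv (deriv f) (ζ - h)
    + 4 * ap * deriv (deriv g) (ζ + h) - 4 * ap * deriv (deriv g) (ζ + 2 * h)

lemma hasDerivAt_affine (c m h : ℝ) : HasDerivAt (fun t : ℝ => c + m * t) m h := by
  simpa using ((hasDerivAt_id h).const_mul m).const_add c

lemma hasDerivAt_comp_affine {F : ℝ → ℝ} {y : ℝ} (c m : ℝ)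
    (hF : DifferentiableAt ℝ F (c + m * y)) :
    HasDerivAt (fun t : ℝ => F (c + m * t)) (deriv F (c + m * y) * m) y :=
  hF.hasDerivAt.comp y (hasDerivAt_affine c m y)

/-- Key one-dimensional consistency lemma. -/
lemma five_point_key (f g : ℝ → ℝ) (ζ : ℝ) (U : Set ℝ) (hU : IsOpen U) (hζ : ζ ∈ U)
    (hf : ContDiffOn ℝ 3 f U) (hg : ContDiffOn ℝ 3 g U)
    (am ap : ℝ) (hj : f ζ = g ζ) (hfl : ap * deriv g ζ = am * deriv f ζ) :
    ∃ C > 0, ∃ δ > 0, ∀ h : ℝ, 0 < h → h < δ →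
      |fivePtPhi f g ζ am ap h| ≤ C * h ^ 3 := by
  obtain ⟨ε, hε, hball⟩ := Metric.isOpen_iff.1 hU ζ hζ
  have hVU : Ioo (ζ - ε) (ζ + ε) ⊆ U := by rw [← Real.ball_eq_Ioo]; exact hball
  set B : Set ℝ := Ioo (-(ε / 2)) (ε / 2) with hBdef
  have hBopen : IsOpen B := isOpen_Ioo
  have h0B : (0 : ℝ) ∈ B := by constructor <;> simp <;> linarith
  -- membership of the four shifted points
  have hmem : ∀ y ∈ B, (ζ - 2 * y) ∈ U ∧ (ζ - y) ∈ U ∧ (ζ + y) ∈ U ∧ (ζ + 2 * y) ∈ U := by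
    intro y hy
    obtain ⟨hy1, hy2⟩ := hy
    refine ⟨hVU ⟨by linarith, by linarith⟩, hVU ⟨by linarith, by linarith⟩,
      hVU ⟨by linarith, by linarith⟩, hVU ⟨by linarith, by linarith⟩⟩
  -- differentiability data
  have hf1 : ContDiffOn ℝ 2 (deriv f) U := hf.deriv_of_isOpen hU (by norm_num)
  have hg1 : ContDiffOn ℝ 2 (deriv g) U := hg.deriv_of_isOpen hU (by norm_num)
  have hfd : ∀ y ∈ U, DifferentiableAt ℝ f y := fun y hy =>
    (hf.differentiableOn (by norm_num)).differentiableAt (hU.mem_nhds hy)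
  have hgd : ∀ y ∈ U, DifferentiableAt ℝ g y := fun y hy =>
    (hg.differentiableOn (by norm_num)).differentiableAt (hU.mem_nhds hy)
  have hf1d : ∀ y ∈ U, DifferentiableAt ℝ (deriv f) y := fun y hy =>
    (hf1.differentiableOn (by norm_num)).differentiableAt (hU.mem_nhds hy)
  have hg1d : ∀ y ∈ U, DifferentiableAt ℝ (deriv g) y := fun y hy =>
    (hg1.differentiableOn (by norm_num)).differentiableAt (hU.mem_nhds hy)
  -- first derivative of φ
  have hφ' : ∀ y ∈ B, HasDerivAt (fivePtPhi f g ζ am ap) (fivePtPsi f g ζ am ap y) y := by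
    intro y hy
    obtain ⟨m1, m2, m3, m4⟩ := hmem y hy
    have t1 : HasDerivAt (fun t : ℝ => f (ζ + (-2) * t)) (deriv f (ζ + (-2) * y) * (-2)) y :=
      hasDerivAt_comp_affine ζ (-2) (hfd _ (by rw [show ζ + (-2:ℝ) * y = ζ - 2 * y from by ring]; exact m1))
    have t2 : HasDerivAt (fun t : ℝ => f (ζ + (-1) * t)) (deriv f (ζ + (-1) * y) * (-1)) y :=
      hasDerivAt_comp_affine ζ (-1) (hfd _ (by rw [show ζ + (-1:ℝ) * y = ζ - y from by ring]; exact m2))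
    have t3 : HasDerivAt (fun t : ℝ => g (ζ + 1 * t)) (deriv g (ζ + 1 * y) * 1) y :=
      hasDerivAt_comp_affine ζ 1 (hgd _ (by rw [show ζ + (1:ℝ) * y = ζ + y from by ring]; exact m3))
    have t4 : HasDerivAt (fun t : ℝ => g (ζ + 2 * t)) (deriv g (ζ + 2 * y) * 2) y :=
      hasDerivAt_comp_affine ζ 2 (hgd _ m4)
    have H := ((((t1.const_mul (-am)).add (t2.const_mul (4 * am))).sub_const
        (3 * (am + ap) * f ζ)).add (t3.const_mul (4 * ap))).sub (t4.const_mul ap)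
    have heq : (fun y : ℝ => -am * f (ζ + (-2) * y) + 4 * am * f (ζ + (-1) * y)
        - 3 * (am + ap) * f ζ + 4 * ap * g (ζ + 1 * y) - ap * g (ζ + 2 * y))
        = fivePtPhi f g ζ am ap := by
      funext t; simp only [fivePtPhi]; ring_nf
    rw [← heq]
    refine H.congr_deriv ?_
    simp only [fivePtPsi]; ring_nf
  -- second derivative of φ (as derivative of ψ)
  have hψ' : ∀ y ∈ B, HasDerivAt (fivePtPsi f g ζ am ap) (fivePtChi f g ζ am ap y) y := by
    intro y hy
    obtain ⟨m1, m2, m3, m4⟩ := hmem y hy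
    have t1 : HasDerivAt (fun t : ℝ => deriv f (ζ + (-2) * t))
        (deriv (deriv f) (ζ + (-2) * y) * (-2)) y :=
      hasDerivAt_comp_affine ζ (-2) (hf1d _ (by rw [show ζ + (-2:ℝ) * y = ζ - 2 * y from by ring]; exact m1))
    have t2 : HasDerivAt (fun t : ℝ => deriv f (ζ + (-1) * t))
        (deriv (deriv f) (ζ + (-1) * y) * (-1)) y :=
      hasDerivAt_comp_affine ζ (-1) (hf1d _ (by rw [show ζ + (-1:ℝ) * y = ζ - y from by ring]; exact m2))
    have t3 : HasDerivAt (fun t : ℝ => deriv g (ζ + 1 * t))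
        (deriv (deriv g) (ζ + 1 * y) * 1) y :=
      hasDerivAt_comp_affine ζ 1 (hg1d _ (by rw [show ζ + (1:ℝ) * y = ζ + y from by ring]; exact m3))
    have t4 : HasDerivAt (fun t : ℝ => deriv g (ζ + 2 * t))
        (deriv (deriv g) (ζ + 2 * y) * 2) y :=
      hasDerivAt_comp_affine ζ 2 (hg1d _ m4)
    have H := (((t1.const_mul (2 * am)).sub (t2.const_mul (4 * am))).add
        (t3.const_mul (4 * ap))).sub (t4.const_mul (2 * ap))
    have heq : (fun y : ℝ => 2 * am * deriv f (ζ + (-2) * y) - 4 * am * deriv f (ζ + (-1) * y)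
        + 4 * ap * deriv g (ζ + 1 * y) - 2 * ap * deriv g (ζ + 2 * y))
        = fivePtPsi f g ζ am ap := by
      funext t; simp only [fivePtPsi]; ring_nf
    rw [← heq]
    refine H.congr_deriv ?_
    simp only [fivePtChi]; ring_nf
  -- values at 0
  have hφ0 : fivePtPhi f g ζ am ap 0 = 0 := by
    have : fivePtPhi f g ζ am ap 0 = 3 * ap * (g ζ - f ζ) := by
      simp only [fivePtPhi]; ring_nf
    rw [this, hj]; ring
  have hψ0 : fivePtPsi f g ζ am ap 0 = 0 := by
    have : fivePtPsi f g ζ am ap 0 = 2 * (ap * deriv g ζ) - 2 * (am * deriv f ζ) := by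
      simp only [fivePtPsi]; ring_nf
    rw [this, hfl]; ring
  have hχ0 : fivePtChi f g ζ am ap 0 = 0 := by
    simp only [fivePtChi]; ring_nf
  -- derivatives at 0
  have hderiv1 : deriv (fivePtPhi f g ζ am ap) 0 = 0 := by
    rw [(hφ' 0 h0B).deriv]; exact hψ0
  have hEq : deriv (fivePtPhi f g ζ am ap) =ᶠ[nhds (0 : ℝ)] fivePtPsi f g ζ am ap :=
    Filter.eventually_of_mem (hBopen.mem_nhds h0B) (fun y hy => (hφ' y hy).deriv)
  have hderiv2 : deriv (deriv (fivePtPhi f g ζ am ap)) 0 = 0 := by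
    rw [hEq.deriv_eq, (hψ' 0 h0B).deriv]; exact hχ0
  -- smoothness of φ on B
  have hφC : ContDiffOn ℝ 3 (fivePtPhi f g ζ am ap) B := by
    have haff : ∀ m : ℝ, ContDiff ℝ 3 (fun t : ℝ => ζ + m * t) :=
      fun m => contDiff_const.add (contDiff_const.mul contDiff_id)
    have hc : ∀ m : ℝ, MapsTo (fun t : ℝ => ζ + m * t) B U → ContDiffOn ℝ 3 (fun t => f (ζ + m * t)) B :=
      fun m hm => hf.comp ((haff m).contDiffOn) hm
    have hc' : ∀ m : ℝ, MapsTo (fun t : ℝ => ζ + m * t) B U → ContDiffOn ℝ 3 (fun t => g (ζ + m * t)) B :=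
      fun m hm => hg.comp ((haff m).contDiffOn) hm
    have c1 := hc (-2) (fun y hy => by simpa [sub_eq_add_neg] using (hmem y hy).1)
    have c2 := hc (-1) (fun y hy => by simpa [sub_eq_add_neg] using (hmem y hy).2.1)
    have c3 := hc' 1 (fun y hy => by simpa using (hmem y hy).2.2.1)
    have c4 := hc' 2 (fun y hy => (hmem y hy).2.2.2)
    have heq : (fun y : ℝ => -am * f (ζ + (-2) * y) + 4 * am * f (ζ + (-1) * y)
        - 3 * (am + ap) * f ζ + 4 * ap * g (ζ + 1 * y) - ap * g (ζ + 2 * y))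
        = fivePtPhi f g ζ am ap := by
      funext t; simp only [fivePtPhi]; ring_nf
    rw [← heq]
    exact ((((contDiffOn_const.mul c1).add (contDiffOn_const.mul c2)).sub
      contDiffOn_const).add (contDiffOn_const.mul c3)).sub (contDiffOn_const.mul c4)
  -- Taylor estimate on [0, δ]
  set δ : ℝ := ε / 4 with hδdef
  have hδpos : 0 < δ := by positivity
  have hsub : Icc (0 : ℝ) δ ⊆ B := by
    intro y hy; obtain ⟨hy1, hy2⟩ := hy
    constructor <;> simp only [hδdef] at * <;> first | linarith | (simp; linarith)
  have hφC3 : ContDiffOn ℝ ((2 : ℕ) + 1) (fivePtPhi f g ζ am ap) (Icc 0 δ) := by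
    exact_mod_cast hφC.mono hsub
  obtain ⟨C, hC⟩ := exists_taylor_mean_remainder_bound (n := 2) hδpos.le hφC3
  -- the Taylor polynomial vanishes
  have hDiffAt : DifferentiableAt ℝ (fivePtPhi f g ζ am ap) 0 := (hφ' 0 h0B).differentiableAt
  have hUD : UniqueDiffOn ℝ (Icc (0 : ℝ) δ) := uniqueDiffOn_Icc hδpos
  have h0m : (0 : ℝ) ∈ Icc (0 : ℝ) δ := left_mem_Icc.2 hδpos.le
  have hid1 : ∀ y ∈ Icc (0 : ℝ) δ,
      iteratedDerivWithin 1 (fivePtPhi f g ζ am ap) (Icc 0 δ) y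
        = deriv (fivePtPhi f g ζ am ap) y := by
    intro y hy
    rw [iteratedDerivWithin_one]
    exact ((hφ' y (hsub hy)).differentiableAt).derivWithin (hUD y hy)
  have hid2 : iteratedDerivWithin 2 (fivePtPhi f g ζ am ap) (Icc 0 δ) 0 = 0 := by
    rw [show (2 : ℕ) = 1 + 1 from rfl, iteratedDerivWithin_succ]
    have : derivWithin (iteratedDerivWithin 1 (fivePtPhi f g ζ am ap) (Icc 0 δ)) (Icc 0 δ) 0
        = derivWithin (deriv (fivePtPhi f g ζ am ap)) (Icc 0 δ) 0 :=
      derivWithin_congr hid1 (hid1 0 h0m)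
    rw [this]
    have hdd : DifferentiableAt ℝ (deriv (fivePtPhi f g ζ am ap)) 0 := by
      apply Filter.EventuallyEq.differentiableAt_iff hEq |>.mpr
      exact (hψ' 0 h0B).differentiableAt
    rw [hdd.derivWithin (hUD 0 h0m)]
    exact hderiv2
  have htaylor : ∀ y : ℝ, taylorWithinEval (fivePtPhi f g ζ am ap) 2 (Icc 0 δ) 0 y = 0 := by
    intro y
    rw [taylor_within_apply]
    have k0 : iteratedDerivWithin 0 (fivePtPhi f g ζ am ap) (Icc 0 δ) 0 = 0 := by
      rw [iteratedDerivWithin_zero]; exact hφ0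
    have k1 : iteratedDerivWithin 1 (fivePtPhi f g ζ am ap) (Icc 0 δ) 0 = 0 := by
      rw [hid1 0 h0m]; exact hderiv1
    rw [Finset.sum_range_succ, Finset.sum_range_succ, Finset.sum_range_one,
      k0, k1, hid2]
    simp
  refine ⟨|C| + 1, by positivity, δ, hδpos, fun h hh0 hhδ => ?_⟩
  have := hC h ⟨hh0.le, hhδ.le⟩
  rw [htaylor h] at this
  simp only [sub_zero, Real.norm_eq_abs] at this
  calc |fivePtPhi f g ζ am ap h| ≤ C * h ^ (2 + 1) := this
    _ = C * h ^ 3 := by ring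
    _ ≤ (|C| + 1) * h ^ 3 := by
        have : C ≤ |C| + 1 := (le_abs_self C).trans (by linarith [abs_nonneg C])
        have hp : (0 : ℝ) < h ^ 3 := by positivity
        nlinarith

/-- Consistency of the 5-point interface finite difference scheme at a grid point on a
horizontal interface line `y = ζ`: if `v`, `w` are three times continuously differentiable
smooth extensions of the solution from the lower and upper sides, satisfying the
homogeneous jump conditions `v(x,ζ) = w(x,ζ)` and `a⁺ ∂w/∂y(x,ζ) = a⁻ ∂v/∂y(x,ζ)`, then
`-a⁻ v(x,ζ-2h) + 4a⁻ v(x,ζ-h) - 3(a⁻+a⁺) v(x,ζ) + 4a⁺ w(x,ζ+h) - a⁺ w(x,ζ+2h) = O(h³)`. -/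
theorem five_point_horizontal_interface_consistency
    (x ζ : ℝ) (v w : ℝ × ℝ → ℝ) (s : Set (ℝ × ℝ)) (hs : IsOpen s) (hmem : (x, ζ) ∈ s)
    (hv : ContDiffOn ℝ 3 v s) (hw : ContDiffOn ℝ 3 w s)
    (aminus aplus : ℝ) (haminus : 0 < aminus) (haplus : 0 < aplus)
    (hjump : v (x, ζ) = w (x, ζ))
    (hflux : aplus * deriv (fun t => w (x, t)) ζ = aminus * deriv (fun t => v (x, t)) ζ) :
    ∃ C > 0, ∃ δ > 0, ∀ h : ℝ, 0 < h → h < δ →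
      |-aminus * v (x, ζ - 2 * h) + 4 * aminus * v (x, ζ - h)
        - 3 * (aminus + aplus) * v (x, ζ)
        + 4 * aplus * w (x, ζ + h) - aplus * w (x, ζ + 2 * h)| ≤ C * h ^ 3 := by
  have hmap : ContDiff ℝ 3 (fun t : ℝ => ((x, t) : ℝ × ℝ)) := contDiff_const.prodMk contDiff_id
  have hUopen : IsOpen {t : ℝ | (x, t) ∈ s} := hs.preimage (continuous_const.prodMk continuous_id)
  have hζU : ζ ∈ {t : ℝ | (x, t) ∈ s} := hmem
  have hfC : ContDiffOn ℝ 3 (fun t => v (x, t)) {t : ℝ | (x, t) ∈ s} :=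
    hv.comp hmap.contDiffOn (fun t ht => ht)
  have hgC : ContDiffOn ℝ 3 (fun t => w (x, t)) {t : ℝ | (x, t) ∈ s} :=
    hw.comp hmap.contDiffOn (fun t ht => ht)
  obtain ⟨C, hCpos, δ, hδpos, hbound⟩ := five_point_key (fun t => v (x, t)) (fun t => w (x, t))
    ζ _ hUopen hζU hfC hgC aminus aplus hjump hflux
  refine ⟨C, hCpos, δ, hδpos, fun h h0 hδ => ?_⟩
  simpa [fivePtPhi] using hbound h h0 hδ
end

section
/- Let ξ ∈ ℝ and let v, w : ℝ → ℝ be three times continuously differentiable on an open interval containing ξ. Let a⁻, a⁺ > 0 be real constants, and assume v(ξ) = w(ξ) and a⁺·w′(ξ) = a⁻·v′(ξ). Then there exist constants C > 0 and δ > 0 such that for all h with 0 < h < δ, | (1/(2h))·( a⁺·(−3·w(ξ) + 4·w(ξ+h) − w(ξ+2h)) − a⁻·(3·v(ξ) − 4·v(ξ−h) + v(ξ−2h)) ) | ≤ C·h². -/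
open Set

lemma taylor2_est (f : ℝ → ℝ) (R : ℝ) (hR : 0 < R) (hf : ContDiffOn ℝ 3 f (Set.Icc 0 R)) :
    ∃ C, ∀ t ∈ Set.Icc (0:ℝ) R,
      |f t - (f 0 + iteratedDerivWithin 1 f (Set.Icc 0 R) 0 * t
          + iteratedDerivWithin 2 f (Set.Icc 0 R) 0 / 2 * t ^ 2)| ≤ C * t ^ 3 := by
  obtain ⟨C, hC⟩ := exists_taylor_mean_remainder_bound (n := 2) hR.le
    (by exact_mod_cast hf)
  refine ⟨C, fun t ht => ?_⟩
  have h := hC t ht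
  rw [taylor_within_apply] at h
  rw [Finset.sum_range_succ, Finset.sum_range_succ, Finset.sum_range_succ,
    Finset.sum_range_zero] at h
  simp only [iteratedDerivWithin_zero, Real.norm_eq_abs, smul_eq_mul] at h
  convert h using 2
  · norm_num [Nat.factorial]; ring
  · ring


set_option maxHeartbeats 1000000 in
/-- One-dimensional interface consistency: if `v`, `w` are three times continuously
differentiable on an open interval containing the interface point `ξ`, with
`v(ξ) = w(ξ)` and `a⁺ w'(ξ) = a⁻ v'(ξ)`, then the combination of the 3-point
backward and forward upwind schemes approximating the (zero) flux jump satisfies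
`(1/(2h)) (a⁺(-3w(ξ) + 4w(ξ+h) - w(ξ+2h)) - a⁻(3v(ξ) - 4v(ξ-h) + v(ξ-2h))) = O(h²)`. -/
theorem one_dim_interface_consistency
    (ξ a b : ℝ) (haξ : a < ξ) (hξb : ξ < b) (v w : ℝ → ℝ)
    (hv : ContDiffOn ℝ 3 v (Set.Ioo a b)) (hw : ContDiffOn ℝ 3 w (Set.Ioo a b))
    (aminus aplus : ℝ) (haminus : 0 < aminus) (haplus : 0 < aplus)
    (hjump : v ξ = w ξ) (hflux : aplus * deriv w ξ = aminus * deriv v ξ) :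
    ∃ C > 0, ∃ δ > 0, ∀ h : ℝ, 0 < h → h < δ →
      |(1 / (2 * h)) * (aplus * (-3 * w ξ + 4 * w (ξ + h) - w (ξ + 2 * h))
        - aminus * (3 * v ξ - 4 * v (ξ - h) + v (ξ - 2 * h)))| ≤ C * h ^ 2 := by
  set R : ℝ := min (ξ - a) (b - ξ) / 2 with hRdef
  have hmin : 0 < min (ξ - a) (b - ξ) := lt_min (by linarith) (by linarith)
  have hR : 0 < R := by positivity
  have hRa : R < ξ - a := by
    have h1 : min (ξ - a) (b - ξ) ≤ ξ - a := min_le_left _ _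
    simp only [hRdef]; linarith
  have hRb : R < b - ξ := by
    have h1 : min (ξ - a) (b - ξ) ≤ b - ξ := min_le_right _ _
    simp only [hRdef]; linarith
  set W : ℝ → ℝ := fun t => w (ξ + t) with hWdef
  set V : ℝ → ℝ := fun t => v (ξ - t) with hVdef
  -- smoothness of W, V on [0, R]
  have hWc : ContDiffOn ℝ 3 W (Set.Icc 0 R) := by
    apply hw.comp ((contDiff_const.add contDiff_id).contDiffOn)
    intro t ht
    simp only [Set.mem_Icc] at ht
    exact ⟨by simpa using lt_of_lt_of_le (by linarith) (by linarith : ξ ≤ ξ + t),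
      by simp; linarith⟩
  have hVc : ContDiffOn ℝ 3 V (Set.Icc 0 R) := by
    apply hv.comp ((contDiff_const.sub contDiff_id).contDiffOn)
    intro t ht
    simp only [Set.mem_Icc] at ht
    exact ⟨by simp; linarith, by simp; linarith⟩
  obtain ⟨Cw, hCw⟩ := taylor2_est W R hR hWc
  obtain ⟨Cv, hCv⟩ := taylor2_est V R hR hVc
  -- first Taylor coefficients
  have hud : UniqueDiffWithinAt ℝ (Set.Icc (0:ℝ) R) 0 :=
    (uniqueDiffOn_Icc hR) 0 ⟨le_refl _, hR.le⟩
  have hξmem : ξ ∈ Set.Ioo a b := ⟨haξ, hξb⟩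
  have hwAt : DifferentiableAt ℝ w ξ :=
    ((hw.contDiffAt (Ioo_mem_nhds haξ hξb)).differentiableAt (by norm_num))
  have hvAt : DifferentiableAt ℝ v ξ :=
    ((hv.contDiffAt (Ioo_mem_nhds haξ hξb)).differentiableAt (by norm_num))
  have hWAt : DifferentiableAt ℝ W 0 := by
    have h0 : DifferentiableAt ℝ (fun t : ℝ => ξ + t) 0 :=
      (differentiableAt_const ξ).add differentiableAt_id
    have hw' : DifferentiableAt ℝ w ((fun t : ℝ => ξ + t) 0) := by simpa using hwAt
    exact hw'.comp 0 h0
  have hVAt : DifferentiableAt ℝ V 0 := by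
    have h0 : DifferentiableAt ℝ (fun t : ℝ => ξ - t) 0 :=
      (differentiableAt_const ξ).sub differentiableAt_id
    have hv' : DifferentiableAt ℝ v ((fun t : ℝ => ξ - t) 0) := by simpa using hvAt
    exact hv'.comp 0 h0
  have hc1W : iteratedDerivWithin 1 W (Set.Icc 0 R) 0 = deriv w ξ := by
    rw [iteratedDerivWithin_one, hWAt.derivWithin hud]
    have := deriv_comp_const_add w ξ 0
    simpa [hWdef] using this
  have hc1V : iteratedDerivWithin 1 V (Set.Icc 0 R) 0 = -deriv v ξ := by
    rw [iteratedDerivWithin_one, hVAt.derivWithin hud]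
    have := deriv_comp_const_sub w ξ 0
    have h2 := deriv_comp_const_sub v ξ 0
    simpa [hVdef] using h2
  set c2W := iteratedDerivWithin 2 W (Set.Icc 0 R) 0 with hc2W
  set c2V := iteratedDerivWithin 2 V (Set.Icc 0 R) 0 with hc2V
  set Cw' := max Cw 0 with hCw'
  set Cv' := max Cv 0 with hCv'
  refine ⟨6 * (aplus * Cw' + aminus * Cv') + 1, by positivity, R / 2, by positivity, ?_⟩
  intro h hh hhR
  have hhmem : h ∈ Set.Icc (0:ℝ) R := ⟨hh.le, by linarith⟩
  have h2mem : (2*h) ∈ Set.Icc (0:ℝ) R := ⟨by linarith, by linarith⟩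
  have hW0 : W 0 = w ξ := by simp [hWdef]
  have hV0 : V 0 = v ξ := by simp [hVdef]
  -- error terms
  set ew1 := W h - (W 0 + deriv w ξ * h + c2W / 2 * h ^ 2) with hew1
  set ew2 := W (2*h) - (W 0 + deriv w ξ * (2*h) + c2W / 2 * (2*h) ^ 2) with hew2
  set ev1 := V h - (V 0 + (-deriv v ξ) * h + c2V / 2 * h ^ 2) with hev1
  set ev2 := V (2*h) - (V 0 + (-deriv v ξ) * (2*h) + c2V / 2 * (2*h) ^ 2) with hev2
  have bw1 : |ew1| ≤ Cw' * h ^ 3 := by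
    have := hCw h hhmem; rw [hc1W] at this
    calc |ew1| ≤ Cw * h ^ 3 := this
      _ ≤ Cw' * h ^ 3 := by
        apply mul_le_mul_of_nonneg_right (le_max_left _ _) (by positivity)
  have bw2 : |ew2| ≤ 8 * Cw' * h ^ 3 := by
    have := hCw (2*h) h2mem; rw [hc1W] at this
    calc |ew2| ≤ Cw * (2*h) ^ 3 := this
      _ ≤ Cw' * (2*h) ^ 3 := by
        apply mul_le_mul_of_nonneg_right (le_max_left _ _) (by positivity)
      _ = 8 * Cw' * h ^ 3 := by ring
  have bv1 : |ev1| ≤ Cv' * h ^ 3 := by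
    have := hCv h hhmem; rw [hc1V] at this
    calc |ev1| ≤ Cv * h ^ 3 := this
      _ ≤ Cv' * h ^ 3 := by
        apply mul_le_mul_of_nonneg_right (le_max_left _ _) (by positivity)
  have bv2 : |ev2| ≤ 8 * Cv' * h ^ 3 := by
    have := hCv (2*h) h2mem; rw [hc1V] at this
    calc |ev2| ≤ Cv * (2*h) ^ 3 := this
      _ ≤ Cv' * (2*h) ^ 3 := by
        apply mul_le_mul_of_nonneg_right (le_max_left _ _) (by positivity)
      _ = 8 * Cv' * h ^ 3 := by ring
  -- key algebraic identity
  have hWh : w (ξ + h) = W h := rfl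
  have hW2h : w (ξ + 2*h) = W (2*h) := rfl
  have hVh : v (ξ - h) = V h := rfl
  have hV2h : v (ξ - 2*h) = V (2*h) := rfl
  have key : aplus * (-3 * w ξ + 4 * w (ξ + h) - w (ξ + 2 * h))
      - aminus * (3 * v ξ - 4 * v (ξ - h) + v (ξ - 2 * h))
      = aplus * (4 * ew1 - ew2) + aminus * (4 * ev1 - ev2)
        + 2 * h * (aplus * deriv w ξ - aminus * deriv v ξ) := by
    rw [hWh, hW2h, hVh, hV2h, ← hW0, ← hV0, hew1, hew2, hev1, hev2]; ring
  have hflux0 : aplus * deriv w ξ - aminus * deriv v ξ = 0 := by linarith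
  rw [key, hflux0]
  have habs : |aplus * (4 * ew1 - ew2) + aminus * (4 * ev1 - ev2) + 2 * h * 0|
      ≤ 12 * (aplus * Cw' + aminus * Cv') * h ^ 3 := by
    have t1 : |aplus * (4 * ew1 - ew2)| ≤ aplus * (12 * Cw' * h ^ 3) := by
      rw [abs_mul, abs_of_pos haplus]
      apply mul_le_mul_of_nonneg_left _ haplus.le
      calc |4 * ew1 - ew2| ≤ |4 * ew1| + |ew2| := abs_sub _ _
        _ = 4 * |ew1| + |ew2| := by rw [abs_mul]; norm_num
        _ ≤ 4 * (Cw' * h ^ 3) + 8 * Cw' * h ^ 3 := by linarith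
        _ = 12 * Cw' * h ^ 3 := by ring
    have t2 : |aminus * (4 * ev1 - ev2)| ≤ aminus * (12 * Cv' * h ^ 3) := by
      rw [abs_mul, abs_of_pos haminus]
      apply mul_le_mul_of_nonneg_left _ haminus.le
      calc |4 * ev1 - ev2| ≤ |4 * ev1| + |ev2| := abs_sub _ _
        _ = 4 * |ev1| + |ev2| := by rw [abs_mul]; norm_num
        _ ≤ 4 * (Cv' * h ^ 3) + 8 * Cv' * h ^ 3 := by linarith
        _ = 12 * Cv' * h ^ 3 := by ring
    calc |aplus * (4 * ew1 - ew2) + aminus * (4 * ev1 - ev2) + 2 * h * 0|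
        ≤ |aplus * (4 * ew1 - ew2) + aminus * (4 * ev1 - ev2)| + |2 * h * 0| := abs_add_le _ _
      _ ≤ |aplus * (4 * ew1 - ew2)| + |aminus * (4 * ev1 - ev2)| + 0 := by
          rw [mul_zero, abs_zero]; linarith [abs_add_le (aplus * (4 * ew1 - ew2)) (aminus * (4 * ev1 - ev2))]
      _ ≤ 12 * (aplus * Cw' + aminus * Cv') * h ^ 3 := by linarith [t1, t2]
  rw [abs_mul]
  have h1 : |1 / (2 * h)| = 1 / (2 * h) := abs_of_pos (by positivity)
  rw [h1]
  calc 1 / (2 * h) * |aplus * (4 * ew1 - ew2) + aminus * (4 * ev1 - ev2) + 2 * h * 0|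
      ≤ 1 / (2 * h) * (12 * (aplus * Cw' + aminus * Cv') * h ^ 3) := by
        apply mul_le_mul_of_nonneg_left habs (by positivity)
    _ = 6 * (aplus * Cw' + aminus * Cv') * h ^ 2 := by
        field_simp; ring
    _ ≤ (6 * (aplus * Cw' + aminus * Cv') + 1) * h ^ 2 := by
        have : (0:ℝ) ≤ h ^ 2 := by positivity
        nlinarith
end
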